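/- arXiv:1607.00453 — 2 statements merged into one kernel-verified Lean document; each statement's English description precedes it below -/
import Mathlib

section
/- The inversive distance between two planar circles is invariant under inversion in a circle centered at a point outside both disks: if I is inversion in a circle centered at c with radius ρ, and c lies outside both closed disks, then I maps each circle Cᵢ to a circle with computable center and radius, and the inversive distance between the image circles equals ⟨C₁,C₂⟩. -/
set_option maxHeartbeats 1000000

private lemma nsq (z : ℂ) : ‖z‖ ^ 2 = z.re ^ 2 + z.im ^ 2 := by
  rw [Complex.sq_norm, Complex.normSq_apply]; ring

private lemma real_key (a b e f r ρ : ℝ) (hr : (a - e) ^ 2 + (b - f) ^ 2 = r ^ 2)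
    (hn : a ^ 2 + b ^ 2 ≠ 0) (hd : e ^ 2 + f ^ 2 - r ^ 2 ≠ 0) :
    (ρ ^ 2 / (a ^ 2 + b ^ 2) * a - ρ ^ 2 / (e ^ 2 + f ^ 2 - r ^ 2) * e) ^ 2
      + (ρ ^ 2 / (a ^ 2 + b ^ 2) * b - ρ ^ 2 / (e ^ 2 + f ^ 2 - r ^ 2) * f) ^ 2
      = (ρ ^ 2 * r / (e ^ 2 + f ^ 2 - r ^ 2)) ^ 2 := by
  set n := a ^ 2 + b ^ 2 with hn'
  set d := e ^ 2 + f ^ 2 - r ^ 2 with hd'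
  have h1 : ρ ^ 2 / n * a - ρ ^ 2 / d * e = ρ ^ 2 * (a * d - e * n) / (n * d) := by
    field_simp
  have h2 : ρ ^ 2 / n * b - ρ ^ 2 / d * f = ρ ^ 2 * (b * d - f * n) / (n * d) := by
    field_simp
  rw [h1, h2, div_pow, div_pow, div_pow, ← add_div,
    div_eq_div_iff (by positivity) (by positivity)]
  linear_combination (ρ ^ 4 * d ^ 3 * n) * hr



private lemma hnum' (a b e f r₁ r₂ ρ d₁ d₂ : ℝ) (hd₁ : d₁ ≠ 0) (hd₂ : d₂ ≠ 0) :
    (ρ ^ 2 / d₁ * a - ρ ^ 2 / d₂ * e) ^ 2 + (ρ ^ 2 / d₁ * b - ρ ^ 2 / d₂ * f) ^ 2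
      - (ρ ^ 2 * r₁ / d₁) ^ 2 - (ρ ^ 2 * r₂ / d₂) ^ 2
    = ρ ^ 4 * ((a * d₂ - e * d₁) ^ 2 + (b * d₂ - f * d₁) ^ 2
        - r₁ ^ 2 * d₂ ^ 2 - r₂ ^ 2 * d₁ ^ 2) / (d₁ * d₂) ^ 2 := by
  field_simp

private lemma hden' (r₁ r₂ ρ d₁ d₂ : ℝ) (hd₁ : d₁ ≠ 0) (hd₂ : d₂ ≠ 0) :
    2 * (ρ ^ 2 * r₁ / d₁) * (ρ ^ 2 * r₂ / d₂) = ρ ^ 4 * (2 * r₁ * r₂) / (d₁ * d₂) := by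
  field_simp

private lemma frac' (M r₁ r₂ ρ d₁ d₂ : ℝ) (h₁ : r₁ ≠ 0) (h₂ : r₂ ≠ 0) (hρ : ρ ≠ 0)
    (hd₁ : d₁ ≠ 0) (hd₂ : d₂ ≠ 0) :
    (ρ ^ 4 * (d₁ * d₂ * M) / (d₁ * d₂) ^ 2) / (ρ ^ 4 * (2 * r₁ * r₂) / (d₁ * d₂))
      = M / (2 * r₁ * r₂) := by
  rw [div_div_div_eq, div_eq_div_iff (by positivity) (by positivity)]
  ring

private lemma real_key2 (a b e f r₁ r₂ ρ : ℝ) (h₁ : r₁ ≠ 0) (h₂ : r₂ ≠ 0) (hρ : ρ ≠ 0)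
    (hd₁ : a ^ 2 + b ^ 2 - r₁ ^ 2 ≠ 0) (hd₂ : e ^ 2 + f ^ 2 - r₂ ^ 2 ≠ 0) :
    ((ρ ^ 2 / (a ^ 2 + b ^ 2 - r₁ ^ 2) * a - ρ ^ 2 / (e ^ 2 + f ^ 2 - r₂ ^ 2) * e) ^ 2
        + (ρ ^ 2 / (a ^ 2 + b ^ 2 - r₁ ^ 2) * b - ρ ^ 2 / (e ^ 2 + f ^ 2 - r₂ ^ 2) * f) ^ 2
        - (ρ ^ 2 * r₁ / (a ^ 2 + b ^ 2 - r₁ ^ 2)) ^ 2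
        - (ρ ^ 2 * r₂ / (e ^ 2 + f ^ 2 - r₂ ^ 2)) ^ 2)
      / (2 * (ρ ^ 2 * r₁ / (a ^ 2 + b ^ 2 - r₁ ^ 2)) * (ρ ^ 2 * r₂ / (e ^ 2 + f ^ 2 - r₂ ^ 2)))
    = ((a - e) ^ 2 + (b - f) ^ 2 - r₁ ^ 2 - r₂ ^ 2) / (2 * r₁ * r₂) := by
  have hN : (a * (e ^ 2 + f ^ 2 - r₂ ^ 2) - e * (a ^ 2 + b ^ 2 - r₁ ^ 2)) ^ 2
      + (b * (e ^ 2 + f ^ 2 - r₂ ^ 2) - f * (a ^ 2 + b ^ 2 - r₁ ^ 2)) ^ 2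
      - r₁ ^ 2 * (e ^ 2 + f ^ 2 - r₂ ^ 2) ^ 2 - r₂ ^ 2 * (a ^ 2 + b ^ 2 - r₁ ^ 2) ^ 2
      = (a ^ 2 + b ^ 2 - r₁ ^ 2) * (e ^ 2 + f ^ 2 - r₂ ^ 2)
        * ((a - e) ^ 2 + (b - f) ^ 2 - r₁ ^ 2 - r₂ ^ 2) := by ring
  rw [hnum' a b e f r₁ r₂ ρ _ _ hd₁ hd₂, hden' r₁ r₂ ρ _ _ hd₁ hd₂, hN,
    frac' _ r₁ r₂ ρ _ _ h₁ h₂ hρ hd₁ hd₂]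

/-- Inversive distance between two planar circles with centers `p₁, p₂` and radii `r₁, r₂`. -/
noncomputable def invDist (p₁ p₂ : ℂ) (r₁ r₂ : ℝ) : ℝ :=
  (‖p₁ - p₂‖ ^ 2 - r₁ ^ 2 - r₂ ^ 2) / (2 * r₁ * r₂)

/-- Inversion in the circle of center `c` and radius `ρ`. -/
noncomputable def circInv (c : ℂ) (ρ : ℝ) (x : ℂ) : ℂ :=
  c + (ρ ^ 2 / ‖x - c‖ ^ 2) • (x - c)

private lemma image_norm (p c : ℂ) (r ρ : ℝ) (h : 0 < r) (hρ : 0 < ρ)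
    (hc : ‖p - c‖ > r) (x : ℂ) (hx : ‖x - p‖ = r) :
    ‖circInv c ρ x - (c + (ρ ^ 2 / (‖p - c‖ ^ 2 - r ^ 2)) • (p - c))‖
      = ρ ^ 2 * r / |‖p - c‖ ^ 2 - r ^ 2| := by
  have hd : 0 < ‖p - c‖ ^ 2 - r ^ 2 := by nlinarith
  have hxc : 0 < ‖x - c‖ := by
    have h1 : ‖p - c‖ - ‖p - x‖ ≤ ‖(p - c) - (p - x)‖ := norm_sub_norm_le _ _
    have h2 : ‖p - x‖ = r := by rw [norm_sub_rev]; exact hx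
    have h3 : (p - c) - (p - x) = x - c := by ring
    rw [h2, h3] at h1; linarith
  have hn : 0 < ‖x - c‖ ^ 2 := by positivity
  rw [abs_of_pos hd]
  have hs : 0 ≤ ρ ^ 2 * r / (‖p - c‖ ^ 2 - r ^ 2) := by positivity
  have hnn : ‖x - c‖ ^ 2 = (x.re - c.re) ^ 2 + (x.im - c.im) ^ 2 := by
    rw [nsq]; simp [Complex.sub_re, Complex.sub_im]
  have hdd : ‖p - c‖ ^ 2 = (p.re - c.re) ^ 2 + (p.im - c.im) ^ 2 := by
    rw [nsq]; simp [Complex.sub_re, Complex.sub_im]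
  have hx2 : ((x.re - c.re) - (p.re - c.re)) ^ 2 + ((x.im - c.im) - (p.im - c.im)) ^ 2
      = r ^ 2 := by
    have hxx : ‖x - p‖ ^ 2 = r ^ 2 := by rw [hx]
    rw [nsq] at hxx
    simp only [Complex.sub_re, Complex.sub_im] at hxx
    linear_combination hxx
  have key : ‖circInv c ρ x - (c + (ρ ^ 2 / (‖p - c‖ ^ 2 - r ^ 2)) • (p - c))‖ ^ 2
      = (ρ ^ 2 * r / (‖p - c‖ ^ 2 - r ^ 2)) ^ 2 := by
    have e1 : (circInv c ρ x - (c + (ρ ^ 2 / (‖p - c‖ ^ 2 - r ^ 2)) • (p - c))).re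
        = ρ ^ 2 / ((x.re - c.re) ^ 2 + (x.im - c.im) ^ 2) * (x.re - c.re)
          - ρ ^ 2 / ((p.re - c.re) ^ 2 + (p.im - c.im) ^ 2 - r ^ 2) * (p.re - c.re) := by
      simp only [circInv, hnn, hdd, Complex.sub_re, Complex.add_re, Complex.smul_re, smul_eq_mul]
      ring
    have e2 : (circInv c ρ x - (c + (ρ ^ 2 / (‖p - c‖ ^ 2 - r ^ 2)) • (p - c))).im
        = ρ ^ 2 / ((x.re - c.re) ^ 2 + (x.im - c.im) ^ 2) * (x.im - c.im)
          - ρ ^ 2 / ((p.re - c.re) ^ 2 + (p.im - c.im) ^ 2 - r ^ 2) * (p.im - c.im) := by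
      simp only [circInv, hnn, hdd, Complex.sub_re, Complex.sub_im, Complex.add_im,
        Complex.smul_im, smul_eq_mul]
      ring
    rw [nsq, e1, e2, hdd]
    exact real_key _ _ _ _ r ρ hx2 (by rw [← hnn]; positivity)
      (by rw [← hdd]; linarith [hd])
  have hnorm := norm_nonneg (circInv c ρ x - (c + (ρ ^ 2 / (‖p - c‖ ^ 2 - r ^ 2)) • (p - c)))
  nlinarith [key, hnorm, hs]

theorem invDist_inversion_invariant (p₁ p₂ c : ℂ) (r₁ r₂ ρ : ℝ)
    (h₁ : 0 < r₁) (h₂ : 0 < r₂) (hρ : 0 < ρ)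
    (hc₁ : ‖p₁ - c‖ > r₁) (hc₂ : ‖p₂ - c‖ > r₂)
    (q₁ q₂ : ℂ) (s₁ s₂ : ℝ)
    (hq₁ : q₁ = c + (ρ ^ 2 / (‖p₁ - c‖ ^ 2 - r₁ ^ 2)) • (p₁ - c))
    (hq₂ : q₂ = c + (ρ ^ 2 / (‖p₂ - c‖ ^ 2 - r₂ ^ 2)) • (p₂ - c))
    (hs₁ : s₁ = ρ ^ 2 * r₁ / |‖p₁ - c‖ ^ 2 - r₁ ^ 2|)
    (hs₂ : s₂ = ρ ^ 2 * r₂ / |‖p₂ - c‖ ^ 2 - r₂ ^ 2|) :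
    (∀ x : ℂ, ‖x - p₁‖ = r₁ → ‖circInv c ρ x - q₁‖ = s₁) ∧
    (∀ x : ℂ, ‖x - p₂‖ = r₂ → ‖circInv c ρ x - q₂‖ = s₂) ∧
    invDist q₁ q₂ s₁ s₂ = invDist p₁ p₂ r₁ r₂ := by
  subst hq₁ hq₂ hs₁ hs₂
  have hd₁ : 0 < ‖p₁ - c‖ ^ 2 - r₁ ^ 2 := by nlinarith [norm_nonneg (p₁ - c)]
  have hd₂ : 0 < ‖p₂ - c‖ ^ 2 - r₂ ^ 2 := by nlinarith [norm_nonneg (p₂ - c)]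
  refine ⟨fun x hx => image_norm p₁ c r₁ ρ h₁ hρ hc₁ x hx,
    fun x hx => image_norm p₂ c r₂ ρ h₂ hρ hc₂ x hx, ?_⟩
  rw [abs_of_pos hd₁, abs_of_pos hd₂]
  unfold invDist
  have hdd₁ : ‖p₁ - c‖ ^ 2 = (p₁.re - c.re) ^ 2 + (p₁.im - c.im) ^ 2 := by
    rw [nsq]; simp [Complex.sub_re, Complex.sub_im]
  have hdd₂ : ‖p₂ - c‖ ^ 2 = (p₂.re - c.re) ^ 2 + (p₂.im - c.im) ^ 2 := by
    rw [nsq]; simp [Complex.sub_re, Complex.sub_im]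
  have hpp : ‖p₁ - p₂‖ ^ 2 = (p₁.re - p₂.re) ^ 2 + (p₁.im - p₂.im) ^ 2 := by
    rw [nsq]; simp [Complex.sub_re, Complex.sub_im]
  have hqq : ‖(c + (ρ ^ 2 / (‖p₁ - c‖ ^ 2 - r₁ ^ 2)) • (p₁ - c))
      - (c + (ρ ^ 2 / (‖p₂ - c‖ ^ 2 - r₂ ^ 2)) • (p₂ - c))‖ ^ 2
      = (ρ ^ 2 / (‖p₁ - c‖ ^ 2 - r₁ ^ 2) * (p₁.re - c.re)
          - ρ ^ 2 / (‖p₂ - c‖ ^ 2 - r₂ ^ 2) * (p₂.re - c.re)) ^ 2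
        + (ρ ^ 2 / (‖p₁ - c‖ ^ 2 - r₁ ^ 2) * (p₁.im - c.im)
          - ρ ^ 2 / (‖p₂ - c‖ ^ 2 - r₂ ^ 2) * (p₂.im - c.im)) ^ 2 := by
    rw [nsq]
    simp only [Complex.sub_re, Complex.sub_im, Complex.add_re, Complex.add_im,
      Complex.smul_re, Complex.smul_im, smul_eq_mul]
    ring
  rw [hqq, hpp, hdd₁, hdd₂,
    show ((p₁.re - p₂.re) ^ 2 + (p₁.im - p₂.im) ^ 2 - r₁ ^ 2 - r₂ ^ 2)
      = ((p₁.re - c.re - (p₂.re - c.re)) ^ 2 + (p₁.im - c.im - (p₂.im - c.im)) ^ 2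
          - r₁ ^ 2 - r₂ ^ 2) from by ring]
  exact real_key2 (p₁.re - c.re) (p₁.im - c.im) (p₂.re - c.re) (p₂.im - c.im) r₁ r₂ ρ
    (ne_of_gt h₁) (ne_of_gt h₂) (ne_of_gt hρ)
    (by rw [← hdd₁]; exact ne_of_gt hd₁) (by rw [← hdd₂]; exact ne_of_gt hd₂)
end

section
/- Under the hypotheses |z-f₁| = r₁ + r and |z-f₂| = r₂ - r with r > 0, the inversive distance between C(z,r) and its rotation C(𝔯(z),r) about i/√3 by 2π/3 is given by h(z) = |√3 z - i|²/(2(|z-f₁| - r₁)²) - 1. -/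
open Complex

/-- Rotation of `ℂ` by angle `2π/3` about the point `i/√3`. -/
noncomputable def rot (z : ℂ) : ℂ :=
  I / Real.sqrt 3 + Complex.exp (2 * Real.pi * I / 3) * (z - I / Real.sqrt 3)

lemma norm_one_sub_exp : ‖(1 : ℂ) - Complex.exp (2 * Real.pi * I / 3)‖ ^ 2 = 3 := by
  have h : (2 * (Real.pi : ℂ) * I / 3) = ((2 * Real.pi / 3 : ℝ) : ℂ) * I := by
    push_cast; ring
  have hc : Real.cos (2 * Real.pi / 3) = -(1/2) := by
    have e : (2 : ℝ) * Real.pi / 3 = Real.pi - Real.pi / 3 := by ring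
    rw [e, Real.cos_pi_sub, Real.cos_pi_div_three]
  have hs : Real.sin (2 * Real.pi / 3) = Real.sqrt 3 / 2 := by
    have e : (2 : ℝ) * Real.pi / 3 = Real.pi - Real.pi / 3 := by ring
    rw [e, Real.sin_pi_sub, Real.sin_pi_div_three]
  rw [h, Complex.exp_mul_I, ← Complex.ofReal_cos, ← Complex.ofReal_sin, hc, hs]
  rw [Complex.sq_norm]
  have h3 : Real.sqrt 3 ^ 2 = 3 := Real.sq_sqrt (by norm_num)
  simp [Complex.normSq_apply]
  nlinarith [h3]

theorem invDist_rotated_cousin_of_tangency (z f₁ f₂ : ℂ) (r r₁ r₂ : ℝ)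
    (hr : 0 < r) (hext : ‖z - f₁‖ = r₁ + r) (hint : ‖z - f₂‖ = r₂ - r) :
    invDist z (rot z) r r = ‖Real.sqrt 3 * z - I‖ ^ 2 / (2 * (‖z - f₁‖ - r₁) ^ 2) - 1 := by
  have hrr : ‖z - f₁‖ - r₁ = r := by linarith
  rw [hrr]
  have hs3 : (Real.sqrt 3 : ℝ) ≠ 0 := by positivity
  have hs3' : ((Real.sqrt 3 : ℝ) : ℂ) ≠ 0 := by exact_mod_cast hs3
  have hfactor : z - rot z = (1 - Complex.exp (2 * Real.pi * I / 3)) * (z - I / Real.sqrt 3) := by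
    unfold rot; ring
  have h1 : ‖z - rot z‖ ^ 2 = 3 * ‖z - I / Real.sqrt 3‖ ^ 2 := by
    rw [hfactor, norm_mul, mul_pow, norm_one_sub_exp]
  have h2 : ‖(Real.sqrt 3 : ℂ) * z - I‖ ^ 2 = 3 * ‖z - I / Real.sqrt 3‖ ^ 2 := by
    have : (Real.sqrt 3 : ℂ) * z - I = (Real.sqrt 3 : ℂ) * (z - I / Real.sqrt 3) := by
      field_simp
    rw [this, norm_mul, mul_pow, Complex.norm_real, Real.norm_eq_abs,
      _root_.abs_of_nonneg (Real.sqrt_nonneg 3), Real.sq_sqrt (by norm_num : (0:ℝ) ≤ 3)]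
  unfold invDist
  rw [h1, h2]
  have hr' : r ≠ 0 := ne_of_gt hr
  field_simp
  ring
end
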